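/- Let 1 ≤ k2 ≤ n2, n2 = m, 2 ≤ n1 ≤ m, and k1 = n1. Let g1 ∈ L^{n1} with wt_R(g1) = n1 and g2 ∈ L^{n2} with wt_R(g2) = n2, and set G1 = Moore(g1, k1) and G2 = Moore(g2, k2). Then the minimum rank distance of the row space of the Kronecker product G1 ⊗ G2 (a linear code of length n1·n2 and dimension k1·k2 over L) equals n2 − k2 + 1; that is, every nonzero codeword has rank weight at least n2 − k2 + 1, and some nonzero codeword has rank weight exactly n2 − k2 + 1. -/
import Mathlib

open Matrix Kronecker

/-- Rank weight of a vector over the extension `L` of the base field `K`: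
the `K`-dimension of the `K`-span of its entries. -/
noncomputable def rankWeight (K : Type*) {L : Type*} [Field K] [Field L] [Algebra K L]
    {ι : Type*} (v : ι → L) : ℕ :=
  Module.finrank K (Submodule.span K (Set.range v))

/-- The `k × n` Moore matrix of `g` with respect to `q`: entry `(i, j)` is `g j ^ q ^ i`. -/
def moore (q : ℕ) {L : Type*} [Field L] {n : ℕ} (g : Fin n → L) (k : ℕ) :
    Matrix (Fin k) (Fin n) L :=
  Matrix.of fun i j => g j ^ q ^ (i : ℕ)

section Aux

open Polynomial

variable {q m : ℕ} {K L : Type*} [Field K] [Fintype K] [Field L] [Algebra K L]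

/-- Evaluation of the linearized (`q`-)polynomial with coefficient vector `x`. -/
def qEval (q : ℕ) {L : Type*} [Field L] {k : ℕ} (x : Fin k → L) (z : L) : L :=
  ∑ i, x i * z ^ q ^ (i : ℕ)

lemma pow_qpow_add (hq : Fintype.card K = q) (i : ℕ) (y z : L) :
    (y + z) ^ q ^ i = y ^ q ^ i + z ^ q ^ i := by
  obtain ⟨p, hp⟩ := CharP.exists K
  haveI := hp
  obtain ⟨n, hpp, hcard⟩ := FiniteField.card K p
  haveI : Fact p.Prime := ⟨hpp⟩
  haveI : CharP L p :=
    charP_of_injective_algebraMap (algebraMap K L).injective p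
  subst hq
  rw [hcard, ← pow_mul]
  apply add_pow_char_pow

lemma algebraMap_pow_qpow (hq : Fintype.card K = q) (i : ℕ) (a : K) :
    (algebraMap K L a) ^ q ^ i = algebraMap K L a := by
  rw [← map_pow]
  subst hq
  rw [FiniteField.pow_card_pow]

/-- The linearized polynomial as a `K`-linear map. -/
noncomputable def qMap (hq : Fintype.card K = q) {k : ℕ} (x : Fin k → L) : L →ₗ[K] L where
  toFun := qEval q x
  map_add' y z := by
    simp [qEval, pow_qpow_add hq, mul_add, Finset.sum_add_distrib]
  map_smul' a z := by
    simp only [qEval, Algebra.smul_def, mul_pow, algebraMap_pow_qpow hq,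
      RingHom.id_apply, Finset.mul_sum]
    exact Finset.sum_congr rfl fun i _ => by ring

@[simp] lemma qMap_apply (hq : Fintype.card K = q) {k : ℕ} (x : Fin k → L) (z : L) :
    qMap hq x z = qEval q x z := rfl

/-- Root-counting: the kernel of a nonzero linearized polynomial with `k`
coefficients has `K`-dimension at most `k - 1`. -/
lemma finrank_ker_qMap_le (hq : Fintype.card K = q) (hm : Module.finrank K L = m)
    (hm1 : 1 ≤ m) {k : ℕ} (x : Fin k → L) (hx : x ≠ 0) :
    Module.finrank K (LinearMap.ker (qMap hq x)) ≤ k - 1 := by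
  classical
  haveI : FiniteDimensional K L := FiniteDimensional.of_finrank_pos (by rw [hm]; omega)
  haveI : Finite L := Module.finite_of_finite K
  haveI : Fintype L := Fintype.ofFinite L
  have hq2 : 2 ≤ q := hq ▸ Fintype.one_lt_card
  obtain ⟨i0, hi0⟩ := Function.ne_iff.mp hx
  simp only [Pi.zero_apply] at hi0
  have hk : 1 ≤ k := i0.pos
  set P : L[X] := ∑ i : Fin k, C (x i) * X ^ q ^ (i : ℕ) with hP
  have hcoeff : P.coeff (q ^ (i0 : ℕ)) = x i0 := by
    rw [hP, finset_sum_coeff]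
    rw [Finset.sum_eq_single i0]
    · simp
    · intro i _ hne
      simp only [coeff_C_mul, coeff_X_pow]
      rw [if_neg, mul_zero]
      intro h
      exact hne (Fin.ext (Nat.pow_right_injective hq2 h.symm))
    · simp
  have hP0 : P ≠ 0 := fun h => hi0 (by simpa [h] using hcoeff.symm)
  have hdeg : P.natDegree ≤ q ^ (k - 1) := by
    refine natDegree_sum_le_of_forall_le _ _ fun i _ => ?_
    refine (natDegree_C_mul_le _ _).trans ?_
    rw [natDegree_X_pow]
    exact Nat.pow_le_pow_right (by omega) (by omega)
  set Z : Finset L := (LinearMap.ker (qMap hq x) : Set L).toFinset with hZ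
  have hsub : Z.val ⊆ P.roots := by
    intro z hz
    rw [Finset.mem_val, hZ, Set.mem_toFinset, SetLike.mem_coe, LinearMap.mem_ker] at hz
    rw [mem_roots hP0]
    rw [IsRoot, hP, eval_finset_sum]
    simpa [qEval] using hz
  have hcard : Z.card ≤ q ^ (k - 1) :=
    (Polynomial.card_le_degree_of_subset_roots hsub).trans hdeg
  have hcard2 : Z.card = q ^ Module.finrank K (LinearMap.ker (qMap hq x)) := by
    rw [hZ, Set.toFinset_card]
    have hcc := Module.card_eq_pow_finrank (K := K) (V := ↥(LinearMap.ker (qMap hq x)))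
    rw [hq] at hcc
    exact (Fintype.card_congr (show ↥((LinearMap.ker (qMap hq x) : Set L)) ≃
      ↥(LinearMap.ker (qMap hq x)) from Equiv.refl _)).trans hcc
  rw [hcard2] at hcard
  exact (Nat.pow_le_pow_iff_right hq2).mp hcard

/-- Existence of a nonzero linearized polynomial vanishing at fewer prescribed points
than its number of coefficients. -/
lemma exists_qEval_vanish (q : ℕ) {k r : ℕ} (hrk : r < k) (u : Fin r → L) :
    ∃ x : Fin k → L, x ≠ 0 ∧ ∀ j, qEval q x (u j) = 0 := by
  set M : Matrix (Fin k) (Fin r) L := Matrix.of fun i j => (u j) ^ q ^ (i : ℕ) with hM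
  have hnotinj : ¬ Function.Injective M.vecMulLinear := by
    intro h
    have := LinearMap.finrank_le_finrank_of_injective h
    simp only [Module.finrank_pi, Fintype.card_fin] at this
    omega
  have hker : LinearMap.ker M.vecMulLinear ≠ ⊥ := by
    intro h
    exact hnotinj (LinearMap.ker_eq_bot.mp h)
  obtain ⟨x, hxmem, hx0⟩ := (Submodule.ne_bot_iff _).mp hker
  refine ⟨x, hx0, fun j => ?_⟩
  have h0 := congrFun (LinearMap.mem_ker.mp hxmem) j
  simpa [qEval, Matrix.vecMulLinear, Matrix.vecMul, dotProduct, hM] using h0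

/-- Entries of a codeword of the Kronecker product of two Moore matrices. -/
lemma vecMul_moore_kron {k1 n1 k2 n2 : ℕ} (g1 : Fin n1 → L) (g2 : Fin n2 → L)
    (x : Fin k1 × Fin k2 → L) (j : Fin n1 × Fin n2) :
    (x ᵥ* (moore q g1 k1 ⊗ₖ moore q g2 k2)) j =
      qEval q (fun i2 => ∑ i1, x (i1, i2) * g1 j.1 ^ q ^ (i1 : ℕ)) (g2 j.2) := by
  obtain ⟨j1, j2⟩ := j
  simp only [Matrix.vecMul, dotProduct, qEval, moore, Matrix.kroneckerMap_apply,
    Matrix.of_apply, Finset.sum_mul, Fintype.sum_prod_type]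
  rw [Finset.sum_comm]
  exact Finset.sum_congr rfl fun i2 _ => Finset.sum_congr rfl fun i1 _ => by ring

end Aux

theorem gk_min_rank_distance_case1
    (q m n1 k1 n2 k2 : ℕ)
    (K L : Type*) [Field K] [Fintype K] [Field L] [Algebra K L]
    (hq : Fintype.card K = q) (hm : Module.finrank K L = m)
    (hk2pos : 1 ≤ k2) (hk2n2 : k2 ≤ n2) (hn2m : n2 = m)
    (hn1 : 2 ≤ n1) (hn1m : n1 ≤ m) (hk1 : k1 = n1)
    (g1 : Fin n1 → L) (hg1 : rankWeight K g1 = n1)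
    (g2 : Fin n2 → L) (hg2 : rankWeight K g2 = n2) :
    (∀ c : Fin n1 × Fin n2 → L,
      (∃ x : Fin k1 × Fin k2 → L, c = x ᵥ* (moore q g1 k1 ⊗ₖ moore q g2 k2)) →
      c ≠ 0 → n2 - k2 + 1 ≤ rankWeight K c) ∧
    ∃ c : Fin n1 × Fin n2 → L,
      (∃ x : Fin k1 × Fin k2 → L, c = x ᵥ* (moore q g1 k1 ⊗ₖ moore q g2 k2)) ∧
      c ≠ 0 ∧ rankWeight K c = n2 - k2 + 1 := by
  classical
  subst hn2m hk1
  have hm1 : 1 ≤ n2 := by omega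
  haveI : NeZero k1 := ⟨by omega⟩
  haveI : FiniteDimensional K L := FiniteDimensional.of_finrank_pos (by rw [hm]; omega)
  simp only [rankWeight] at hg1 hg2 ⊢
  have hspan2 : Submodule.span K (Set.range g2) = ⊤ :=
    Submodule.eq_top_of_finrank_eq (by rw [hg2, hm])
  constructor
  · rintro c ⟨x, rfl⟩ hc0
    obtain ⟨⟨j1, j2⟩, hcj⟩ := Function.ne_iff.mp hc0
    simp only [Pi.zero_apply] at hcj
    set y : Fin k2 → L := fun i2 => ∑ i1, x (i1, i2) * g1 j1 ^ q ^ (i1 : ℕ) with hy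
    have hcy : ∀ j2' : Fin n2,
        (x ᵥ* (moore q g1 k1 ⊗ₖ moore q g2 k2)) (j1, j2') = qMap hq y (g2 j2') :=
      fun j2' => vecMul_moore_kron g1 g2 x (j1, j2')
    have hy0 : y ≠ 0 := by
      intro h
      apply hcj
      rw [hcy j2, h]
      simp [qEval]
    have hker := finrank_ker_qMap_le hq hm hm1 y hy0
    have hrn := LinearMap.finrank_range_add_finrank_ker (qMap hq y)
    rw [hm] at hrn
    have hle : LinearMap.range (qMap hq y) ≤
        Submodule.span K (Set.range (x ᵥ* (moore q g1 k1 ⊗ₖ moore q g2 k2))) := by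
      rw [← Submodule.map_top, ← hspan2, Submodule.map_span, Submodule.span_le]
      rintro _ ⟨_, ⟨j2', rfl⟩, rfl⟩
      exact Submodule.subset_span ⟨(j1, j2'), (hcy j2')⟩
    have hmono := Submodule.finrank_mono hle
    omega
  · -- existence of a minimum-weight codeword
    have hli2 : LinearIndependent K g2 :=
      linearIndependent_iff_card_eq_finrank_span.mpr
        (by rw [Set.finrank, hg2, Fintype.card_fin])
    obtain ⟨b, hb0, hbv⟩ := exists_qEval_vanish (L := L) q (show k2 - 1 < k2 by omega)
      (fun j : Fin (k2 - 1) => g2 ⟨(j : ℕ), by omega⟩)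
    obtain ⟨a, ha0, hav⟩ := exists_qEval_vanish (L := L) q (show k1 - 1 < k1 by omega)
      (fun j : Fin (k1 - 1) => g1 ⟨(j : ℕ) + 1, by omega⟩)
    have hav' : ∀ j : Fin k1, j ≠ 0 → qEval q a (g1 j) = 0 := by
      intro j hj
      have hjv : (j : ℕ) ≠ 0 := fun h => hj (Fin.ext h)
      have h := hav ⟨(j : ℕ) - 1, by omega⟩
      have : g1 ⟨((⟨(j : ℕ) - 1, by omega⟩ : Fin (k1 - 1)) : ℕ) + 1, by omega⟩ = g1 j := by
        congr 1
        exact Fin.ext (by simp; omega)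
      rwa [this] at h
    set lam := qEval q a (g1 0) with hlam
    have hlam0 : lam ≠ 0 := by
      intro h0
      have hall : Submodule.span K (Set.range g1) ≤ LinearMap.ker (qMap hq a) := by
        rw [Submodule.span_le]
        rintro _ ⟨j, rfl⟩
        rw [SetLike.mem_coe, LinearMap.mem_ker, qMap_apply]
        by_cases hj : j = 0
        · rw [hj, ← hlam]; exact h0
        · exact hav' j hj
      have h1 := Submodule.finrank_mono hall
      have h2 := finrank_ker_qMap_le hq hm hm1 a ha0
      omega
    have hbex : ∃ j2 : Fin n2, qEval q b (g2 j2) ≠ 0 := by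
      by_contra hno
      push_neg at hno
      have hall : Submodule.span K (Set.range g2) ≤ LinearMap.ker (qMap hq b) :=
        Submodule.span_le.mpr (by
          rintro _ ⟨j, rfl⟩
          rw [SetLike.mem_coe, LinearMap.mem_ker, qMap_apply]
          exact hno j)
      have h1 := Submodule.finrank_mono hall
      have h2 := finrank_ker_qMap_le hq hm hm1 b hb0
      rw [hg2] at h1
      omega
    obtain ⟨j2w, hj2w⟩ := hbex
    set b' : Fin k2 → L := fun i => lam * b i with hb'
    have hb'eval : ∀ z : L, qEval q b' z = lam * qEval q b z := by
      intro z
      rw [qEval, qEval, Finset.mul_sum]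
      exact Finset.sum_congr rfl fun i _ => by rw [hb']; ring
    have hb'0 : b' ≠ 0 := by
      obtain ⟨i, hi⟩ := Function.ne_iff.mp hb0
      simp only [Pi.zero_apply] at hi
      refine Function.ne_iff.mpr ⟨i, ?_⟩
      simp only [hb', Pi.zero_apply]
      exact mul_ne_zero hlam0 hi
    set x : Fin k1 × Fin k2 → L := fun p => a p.1 * b p.2 with hx
    set c : Fin k1 × Fin n2 → L := x ᵥ* (moore q g1 k1 ⊗ₖ moore q g2 k2) with hc
    have hcval : ∀ j1 j2, c (j1, j2) = qEval q a (g1 j1) * qEval q b (g2 j2) := by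
      intro j1 j2
      rw [hc, vecMul_moore_kron]
      simp only [qEval]
      rw [Finset.sum_mul_sum, Finset.sum_comm]
      refine Finset.sum_congr rfl fun i2 _ => ?_
      rw [Finset.sum_mul]
      exact Finset.sum_congr rfl fun i1 _ => by simp only [hx]; ring
    have hc0 : ∀ j2, c (0, j2) = qEval q b' (g2 j2) := by
      intro j2
      rw [hcval, hb'eval, ← hlam]
    have hcz : ∀ j1 j2, j1 ≠ 0 → c (j1, j2) = 0 := fun j1 j2 h => by
      rw [hcval, hav' j1 h, zero_mul]
    refine ⟨c, ⟨x, hc⟩, ?_, ?_⟩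
    · intro h
      have h1 : c (0, j2w) = 0 := by rw [h]; rfl
      rw [hc0 j2w, hb'eval] at h1
      exact mul_ne_zero hlam0 hj2w h1
    · have hspanc : Submodule.span K (Set.range c) = LinearMap.range (qMap hq b') := by
        apply le_antisymm
        · rw [Submodule.span_le]
          rintro _ ⟨⟨j1, j2⟩, rfl⟩
          by_cases hj : j1 = 0
          · subst hj
            rw [SetLike.mem_coe]
            exact ⟨g2 j2, (hc0 j2).symm⟩
          · rw [hcz j1 j2 hj]
            exact Submodule.zero_mem _
        · rw [← Submodule.map_top, ← hspan2, Submodule.map_span, Submodule.span_le]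
          rintro _ ⟨_, ⟨j2', rfl⟩, rfl⟩
          exact Submodule.subset_span ⟨(0, j2'), hc0 j2'⟩
      have hkle := finrank_ker_qMap_le hq hm hm1 b' hb'0
      set u : Fin (k2 - 1) → L := fun j => g2 ⟨(j : ℕ), by omega⟩ with hu
      have huinj : Function.Injective (fun j : Fin (k2 - 1) => (⟨(j : ℕ), by omega⟩ : Fin n2)) :=
        fun j j' h => Fin.ext (by simpa using congrArg Fin.val h)
      have huli : LinearIndependent K u := hli2.comp _ huinj
      have hufr : Module.finrank K (Submodule.span K (Set.range u)) = k2 - 1 := by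
        rw [finrank_span_eq_card huli, Fintype.card_fin]
      have hkge : Submodule.span K (Set.range u) ≤ LinearMap.ker (qMap hq b') := by
        rw [Submodule.span_le]
        rintro _ ⟨j, rfl⟩
        rw [SetLike.mem_coe, LinearMap.mem_ker, qMap_apply, hu, hb'eval, hbv j, mul_zero]
      have h1 := Submodule.finrank_mono hkge
      have hrn := LinearMap.finrank_range_add_finrank_ker (qMap hq b')
      rw [hm] at hrn
      rw [hspanc]
      omega
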